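/- Let n ≥ 1 and consider the set S = {1, …, 2n+1} × {A, B, C} ∪ {1, …, 2n+1} × {A', B', C'} of tail-edge labels of the 3-crossing hexagonal template. Define the pairing given by the exterior connections iX ↔ iX' (for X ∈ {A, B, C}) and the interior connections: 1A' ↔ (2n+1)C, 1B' ↔ (2n+1)A, 1C' ↔ (2n+1)B; (2i+1)X ↔ 2(n−i)Y for the cyclic pairs (X,Y) ∈ {(A,C),(B,A),(C,B)} and i = 0,…,n−1; and (2i+1)X' ↔ (2(n−i)+2)Y' for (X',Y') ∈ {(A',C'),(B',A'),(C',B')} and i = 1,…,n. Then the permutation obtained by alternately applying the exterior and interior pairings acts transitively on S, i.e., the resulting closed curve is a single component (a knot, not a link). -/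

import Mathlib

/-- Labels for the six families of tail edges of the 3-crossing hexagonal template. -/
inductive Label3 : Type
  | A | B | C | A' | B' | C'
deriving DecidableEq

open Label3 in
/-- The pairing rules (exterior and interior connections) on labels `(i, X)`,
listed as directed pairs; the graph will symmetrize them. -/
def pair3 (n : ℕ) : ℕ × Label3 → ℕ × Label3 → Prop := fun x y =>
  -- exterior connections iX ↔ iX'
  (∃ i, 1 ≤ i ∧ i ≤ 2 * n + 1 ∧
    ((x = (i, A) ∧ y = (i, A')) ∨ (x = (i, B) ∧ y = (i, B')) ∨
     (x = (i, C) ∧ y = (i, C')))) ∨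
  -- interior connections across the hexagon
  ((x = (1, A') ∧ y = (2 * n + 1, C)) ∨
   (x = (1, B') ∧ y = (2 * n + 1, A)) ∨
   (x = (1, C') ∧ y = (2 * n + 1, B))) ∨
  (∃ i, i ≤ n - 1 ∧
    ((x = (2 * i + 1, A) ∧ y = (2 * (n - i), C)) ∨
     (x = (2 * i + 1, B) ∧ y = (2 * (n - i), A)) ∨
     (x = (2 * i + 1, C) ∧ y = (2 * (n - i), B)))) ∨
  (∃ i, 1 ≤ i ∧ i ≤ n ∧
    ((x = (2 * i + 1, A') ∧ y = (2 * (n - i) + 2, C')) ∨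
     (x = (2 * i + 1, B') ∧ y = (2 * (n - i) + 2, A')) ∨
     (x = (2 * i + 1, C') ∧ y = (2 * (n - i) + 2, B'))))

/-- The tail-edge labels `{1,…,2n+1} × {A,B,C,A',B',C'}` of the template. -/
def S3 (n : ℕ) : Type := {i : ℕ // 1 ≤ i ∧ i ≤ 2 * n + 1} × Label3

namespace T3
open Label3

def G (n : ℕ) : SimpleGraph (S3 n) :=
  SimpleGraph.fromRel (fun a b : S3 n => pair3 n (a.1.1, a.2) (b.1.1, b.2))

def V (n i : ℕ) (h : 1 ≤ i ∧ i ≤ 2 * n + 1) (X : Label3) : S3 n := (⟨i, h⟩, X)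

@[simp] lemma V_fst (n i h X) : (V n i h X).1.1 = i := rfl
@[simp] lemma V_snd (n i h X) : (V n i h X).2 = X := rfl

lemma adj_of {n : ℕ} {a b : S3 n} (hne : a ≠ b)
    (h : pair3 n (a.1.1, a.2) (b.1.1, b.2) ∨ pair3 n (b.1.1, b.2) (a.1.1, a.2)) :
    (G n).Adj a b := by
  rw [G, SimpleGraph.fromRel_adj]; exact ⟨hne, h⟩

lemma V_ne_idx {n i j hi hj X Y} (h : i ≠ j) : V n i hi X ≠ V n j hj Y := by
  intro e; exact h (congrArg (fun p => p.1.1) e)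

lemma V_ne_lab {n i j hi hj X Y} (h : X ≠ Y) : V n i hi X ≠ V n j hj Y := by
  intro e; exact h (congrArg Prod.snd e)

/-- primed version of a letter -/
def pr : Label3 → Label3 | A => A' | B => B' | C => C' | x => x
/-- cyclic successor on letters: odd `X` pairs with even `nx X` -/
def nx : Label3 → Label3 | A => C | B => A | C => B | x => x
/-- inverse of `nx` -/
def pv : Label3 → Label3 | C => A | A => B | B => C | x => x

/-- exterior edge: (i,X) ~ (i,X') -/
lemma reach_ext {n : ℕ} (i : ℕ) (h : 1 ≤ i ∧ i ≤ 2 * n + 1) (X : Label3)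
    (hX : X = A ∨ X = B ∨ X = C) :
    (G n).Reachable (V n i h X) (V n i h (pr X)) := by
  refine (adj_of ?_ (Or.inl ?_)).reachable
  · rcases hX with rfl | rfl | rfl <;> exact V_ne_lab (by simp [pr])
  · refine Or.inl ⟨i, h.1, h.2, ?_⟩
    rcases hX with rfl | rfl | rfl <;> simp [pr]

/-- chain step: (2j+1, X) ~ (2j+3, X) for unprimed X, j+1 ≤ n -/
lemma step {n : ℕ} (j : ℕ) (hj : j + 1 ≤ n) (X : Label3)
    (hX : X = A ∨ X = B ∨ X = C)
    (h1 : 1 ≤ 2*j+1 ∧ 2*j+1 ≤ 2*n+1) (h2 : 1 ≤ 2*j+3 ∧ 2*j+3 ≤ 2*n+1) :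
    (G n).Reachable (V n (2*j+1) h1 X) (V n (2*j+3) h2 X) := by
  have hm : 1 ≤ 2*(n-j) ∧ 2*(n-j) ≤ 2*n+1 := by omega
  have a12 : (G n).Adj (V n (2*j+1) h1 X) (V n (2*(n-j)) hm (nx X)) := by
    refine adj_of (V_ne_idx (by omega)) (Or.inl ?_)
    refine Or.inr (Or.inr (Or.inl ⟨j, by omega, ?_⟩))
    rcases hX with rfl | rfl | rfl <;> simp [nx]
  have a23 : (G n).Reachable (V n (2*(n-j)) hm (nx X)) (V n (2*(n-j)) hm (pr (nx X))) := by
    refine reach_ext _ _ _ ?_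
    rcases hX with rfl | rfl | rfl <;> simp [nx]
  have a43 : (G n).Adj (V n (2*j+3) h2 (pr X)) (V n (2*(n-j)) hm (pr (nx X))) := by
    refine adj_of (V_ne_idx (by omega)) (Or.inl ?_)
    refine Or.inr (Or.inr (Or.inr ⟨j+1, by omega, by omega, ?_⟩))
    rcases hX with rfl | rfl | rfl <;>
      simp [pr, nx, Prod.ext_iff] <;> omega
  have a45 : (G n).Reachable (V n (2*j+3) h2 X) (V n (2*j+3) h2 (pr X)) :=
    reach_ext _ _ _ hX
  exact a12.reachable.trans (a23.trans ((a43.reachable.symm).trans a45.symm))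

/-- odd vertices reach index 1 with same letter -/
lemma odd_reach {n : ℕ} (X : Label3) (hX : X = A ∨ X = B ∨ X = C) :
    ∀ j (_ : j ≤ n) h1 hone,
      (G n).Reachable (V n (2*j+1) h1 X) (V n 1 hone X)
  | 0, _, h1, hone => by
      have : (V n (2*0+1) h1 X) = V n 1 hone X := by
        simp [V] <;> rfl
      rw [this]
  | j+1, hj, h1, hone => by
      have e : 2*(j+1)+1 = 2*j+3 := by omega
      have h1' : 1 ≤ 2*j+3 ∧ 2*j+3 ≤ 2*n+1 := by omega
      have : V n (2*(j+1)+1) h1 X = V n (2*j+3) h1' X := by simp [V, e] <;> rfl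
      rw [this]
      exact ((step j (by omega) X hX (by omega) h1').symm.trans
        (odd_reach X hX j (by omega) _ hone))


/-- the letter under the prime -/
def un : Label3 → Label3 | A' => A | B' => B | C' => C | x => x

/-- edge between odd (2j+1, X) and even (2(n-j), nx X) -/
lemma odd_even_adj {n : ℕ} (j : ℕ) (hj : j + 1 ≤ n) (X : Label3)
    (hX : X = A ∨ X = B ∨ X = C)
    (h1 : 1 ≤ 2*j+1 ∧ 2*j+1 ≤ 2*n+1) (hm : 1 ≤ 2*(n-j) ∧ 2*(n-j) ≤ 2*n+1) :
    (G n).Adj (V n (2*j+1) h1 X) (V n (2*(n-j)) hm (nx X)) := by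
  refine adj_of (V_ne_idx (by omega)) (Or.inl ?_)
  refine Or.inr (Or.inr (Or.inl ⟨j, by omega, ?_⟩))
  rcases hX with rfl | rfl | rfl <;> simp [nx]

/-- the crossing edge (1, X') — (2n+1, nx X) -/
lemma cross {n : ℕ} (X : Label3) (hX : X = A ∨ X = B ∨ X = C)
    (h1 : 1 ≤ 1 ∧ 1 ≤ 2*n+1) (h2 : 1 ≤ 2*n+1 ∧ 2*n+1 ≤ 2*n+1) :
    (G n).Adj (V n 1 h1 (pr X)) (V n (2*n+1) h2 (nx X)) := by
  refine adj_of (V_ne_lab ?_) (Or.inl (Or.inr (Or.inl ?_)))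
  · rcases hX with rfl | rfl | rfl <;> simp [pr, nx]
  · rcases hX with rfl | rfl | rfl <;> simp [pr, nx]

/-- the three base vertices (1, A), (1, B), (1, C) are all connected -/
lemma base_reach {n : ℕ} (X : Label3) (hX : X = A ∨ X = B ∨ X = C)
    (h1 : 1 ≤ 1 ∧ 1 ≤ 2*n+1) :
    (G n).Reachable (V n 1 h1 X) (V n 1 h1 A) := by
  have h2 : 1 ≤ 2*n+1 ∧ 2*n+1 ≤ 2*n+1 := by omega
  have hC : (G n).Reachable (V n 1 h1 C) (V n 1 h1 A) := by
    have r1 : (G n).Reachable (V n 1 h1 C) (V n (2*n+1) h2 C) :=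
      (odd_reach C (by simp) n le_rfl h2 h1).symm
    have r2 : (G n).Adj (V n 1 h1 A') (V n (2*n+1) h2 C) := cross A (by simp) h1 h2
    have r3 : (G n).Reachable (V n 1 h1 A) (V n 1 h1 A') := reach_ext 1 h1 A (by simp)
    exact r1.trans (r2.reachable.symm.trans r3.symm)
  have hB : (G n).Reachable (V n 1 h1 B) (V n 1 h1 A) := by
    have r1 : (G n).Reachable (V n 1 h1 B) (V n (2*n+1) h2 B) :=
      (odd_reach B (by simp) n le_rfl h2 h1).symm
    have r2 : (G n).Adj (V n 1 h1 C') (V n (2*n+1) h2 B) := cross C (by simp) h1 h2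
    have r3 : (G n).Reachable (V n 1 h1 C) (V n 1 h1 C') := reach_ext 1 h1 C (by simp)
    exact r1.trans (r2.reachable.symm.trans (r3.symm.trans hC))
  rcases hX with rfl | rfl | rfl
  · rfl
  · exact hB
  · exact hC

/-- every unprimed vertex reaches the hub (1, A) -/
lemma unprimed_to_hub {n : ℕ} (hn : 1 ≤ n) (m : ℕ) (hm : 1 ≤ m ∧ m ≤ 2*n+1)
    (X : Label3) (hX : X = A ∨ X = B ∨ X = C) (h1 : 1 ≤ 1 ∧ 1 ≤ 2*n+1) :
    (G n).Reachable (V n m hm X) (V n 1 h1 A) := by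
  rcases Nat.even_or_odd m with ⟨j, hj⟩ | ⟨j, hj⟩
  · -- m = j + j even, 1 ≤ j ≤ n
    have hjn : 1 ≤ j ∧ j ≤ n := by omega
    have hodd : 1 ≤ 2*(n-j)+1 ∧ 2*(n-j)+1 ≤ 2*n+1 := by omega
    have hXpv : pv X = A ∨ pv X = B ∨ pv X = C := by
      rcases hX with rfl | rfl | rfl <;> simp [pv]
    have hadj : (G n).Adj (V n (2*(n-j)+1) hodd (pv X)) (V n (2*(n-(n-j))) (by omega) (nx (pv X))) :=
      odd_even_adj (n-j) (by omega) (pv X) hXpv hodd (by omega)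
    have heq : V n (2*(n-(n-j))) (by omega : 1 ≤ 2*(n-(n-j)) ∧ 2*(n-(n-j)) ≤ 2*n+1) (nx (pv X))
        = V n m hm X := by
      have e1 : 2*(n-(n-j)) = m := by omega
      have e2 : nx (pv X) = X := by rcases hX with rfl | rfl | rfl <;> simp [pv, nx]
      simp [V, e1, e2] <;> rfl
    rw [heq] at hadj
    exact hadj.reachable.symm.trans
      ((odd_reach (pv X) hXpv (n-j) (by omega) hodd h1).trans (base_reach (pv X) hXpv h1))
  · -- m = 2j + 1 odd, j ≤ n
    have e : m = 2*j+1 := by omega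
    have hj' : j ≤ n := by omega
    have heq : V n m hm X = V n (2*j+1) (by omega) X := by simp [V, e] <;> rfl
    rw [heq]
    exact (odd_reach X hX j hj' (by omega) h1).trans (base_reach X hX h1)

/-- every vertex reaches the hub (1, A) -/
lemma to_hub {n : ℕ} (hn : 1 ≤ n) (m : ℕ) (hm : 1 ≤ m ∧ m ≤ 2*n+1)
    (L : Label3) (h1 : 1 ≤ 1 ∧ 1 ≤ 2*n+1) :
    (G n).Reachable (V n m hm L) (V n 1 h1 A) := by
  cases L with
  | A => exact unprimed_to_hub hn m hm A (by simp) h1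
  | B => exact unprimed_to_hub hn m hm B (by simp) h1
  | C => exact unprimed_to_hub hn m hm C (by simp) h1
  | A' => exact (reach_ext m hm A (by simp)).symm.trans (unprimed_to_hub hn m hm A (by simp) h1)
  | B' => exact (reach_ext m hm B (by simp)).symm.trans (unprimed_to_hub hn m hm B (by simp) h1)
  | C' => exact (reach_ext m hm C (by simp)).symm.trans (unprimed_to_hub hn m hm C (by simp) h1)

end T3

/-- the graph on the tail-edge labels whose edges are given by the
exterior and interior pairings is connected: the template traces a single
closed curve, i.e. a knot and not a link. -/
theorem template3_single_component (n : ℕ) (hn : 1 ≤ n) :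
    (SimpleGraph.fromRel (fun a b : S3 n =>
      pair3 n (a.1.1, a.2) (b.1.1, b.2))).Connected := by
  have h1 : 1 ≤ 1 ∧ 1 ≤ 2*n+1 := by omega
  haveI : Nonempty (S3 n) :=
    ⟨((⟨1, h1⟩ : {i : ℕ // 1 ≤ i ∧ i ≤ 2*n+1}), Label3.A)⟩
  apply SimpleGraph.Connected.mk
  intro u v
  have hu := T3.to_hub hn u.1.1 u.1.2 u.2 h1
  have hv := T3.to_hub hn v.1.1 v.1.2 v.2 h1
  have eu : T3.V n u.1.1 u.1.2 u.2 = u := rfl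
  have ev : T3.V n v.1.1 v.1.2 v.2 = v := rfl
  rw [eu] at hu; rw [ev] at hv
  exact hu.trans hv.symm
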